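/- If a discrete random vector (Y_v)_{v∈V} with strictly positive joint probability mass function factorizes with respect to an undirected graph G, i.e., its pmf is a product of nonnegative functions each depending only on the variables in a complete subset (clique) of G, then for any two non-adjacent vertices v and u, Y_v and Y_u are conditionally independent given all remaining variables. -/

import Mathlib

open Finset

/-- (Hammersley–Clifford, one direction.) If a strictly positive joint pmf
f on a finite product space factorizes with respect to an undirected graph G — that is,
f(y) = ∏_C φ_C(y) where each factor φ_C depends only on the coordinates in C and is
trivial (≡ 1) unless C is a complete subset (clique) of G — then for any two
non-adjacent vertices v, u, the variables Y_v and Y_u are conditionally independent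
given all the remaining variables:
f(a,b,z)·P(rest = z) = P(Y_v = a, rest = z)·P(Y_u = b, rest = z). -/
theorem factorization_implies_pairwise_markov
    {V : Type*} [Fintype V] [DecidableEq V] (G : SimpleGraph V)
    {α : Type*} [Fintype α]
    (f : (V → α) → ℝ) (hpos : ∀ y, 0 < f y) (hsum : ∑ y : V → α, f y = 1)
    (φ : Finset V → ((V → α) → ℝ))
    (hlocal : ∀ (C : Finset V) (y y' : V → α), (∀ w ∈ C, y w = y' w) → φ C y = φ C y')
    (hclique : ∀ C : Finset V, ¬ G.IsClique (↑C : Set V) → ∀ y, φ C y = 1)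
    (hfact : ∀ y, f y = ∏ C : Finset V, φ C y)
    (v u : V) (hvu : v ≠ u) (hnadj : ¬ G.Adj v u) :
    ∀ (z : V → α) (a b : α),
      f (Function.update (Function.update z v a) u b) *
          (∑ a' : α, ∑ b' : α, f (Function.update (Function.update z v a') u b')) =
        (∑ b' : α, f (Function.update (Function.update z v a) u b')) *
          (∑ a' : α, f (Function.update (Function.update z v a') u b)) := by
  intro z a b
  set y : α → α → (V → α) :=
    fun a' b' => Function.update (Function.update z v a') u b' with hy
  -- coordinate description of y
  have hyw : ∀ a' b' w, y a' b' w = if w = u then b' else if w = v then a' else z w := by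
    intro a' b' w
    by_cases hwu : w = u
    · simp [hy, hwu, Function.update]
    · by_cases hwv : w = v <;> simp [hy, Function.update, hwu, hwv]
  set g : α → ℝ := fun a' => ∏ C ∈ univ.filter (fun C : Finset V => u ∉ C), φ C (y a' b)
    with hg
  set h : α → ℝ := fun b' => ∏ C ∈ univ.filter (fun C : Finset V => u ∈ C), φ C (y a b')
    with hh
  have key : ∀ a' b', f (y a' b') = g a' * h b' := by
    intro a' b'
    rw [hfact]
    rw [← Finset.prod_filter_mul_prod_filter_not univ (fun C : Finset V => u ∉ C)]
    congr 1
    · apply Finset.prod_congr rfl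
      intro C hC
      simp only [Finset.mem_filter] at hC
      apply hlocal
      intro w hw
      have hwu : w ≠ u := fun h => hC.2 (h ▸ hw)
      rw [hyw, hyw, if_neg hwu, if_neg hwu]
    · rw [Finset.filter_not, ← Finset.filter_not]
      apply Finset.prod_congr
      · congr 1
        ext C
        simp
      · intro C hC
        simp only [Finset.mem_filter, not_not] at hC
        by_cases hcl : G.IsClique (↑C : Set V)
        · have hvC : v ∉ C := by
            intro hvC
            exact hnadj (hcl hvC hC.2 hvu)
          apply hlocal
          intro w hw
          have hwv : w ≠ v := fun h => hvC (h ▸ hw)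
          rw [hyw, hyw]
          by_cases hwu : w = u <;> simp [hwu, hwv]
        · rw [hclique C hcl, hclique C hcl]
  simp only [hy] at key
  simp only [key]
  rw [Finset.sum_comm]
  simp only [← Finset.sum_mul, ← Finset.mul_sum]
  ring
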